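/- One-dimensional density estimate (Heintze–Karcher/Ketterer form): let K ∈ ℝ, N > 1, T > 0; if K > 0 assume additionally T ≤ π·√((N−1)/K). Let h : [0,T) → ℝ be positive, satisfy the (K,N)-convexity inequality on [0,T), and possess a right derivative h'₊(0) at 0 with h'₊(0) ≤ H₀ · h(0) for some H₀ ∈ ℝ. Then h(θ) ≤ J_{K,N,H₀}(θ) · h(0) for every θ ∈ [0,T). -/

import Mathlib

noncomputable section
open Filter Set Topology

/-- The distortion coefficient `σ_κ^{(s)}(θ)`. -/
def sigmaCoeff (κ s θ : ℝ) : ℝ :=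
  if 0 < κ then Real.sin (s * θ * Real.sqrt κ) / Real.sin (θ * Real.sqrt κ)
  else if κ = 0 then s
  else Real.sinh (s * θ * Real.sqrt (-κ)) / Real.sinh (θ * Real.sqrt (-κ))

/-- A positive function `h` on a real interval `I` satisfies the `(K,N)`-convexity
inequality. -/
def KNConvexOn (K N : ℝ) (I : Set ℝ) (h : ℝ → ℝ) : Prop :=
  ∀ t₀ ∈ I, ∀ t₁ ∈ I, t₀ < t₁ → ∀ l ∈ Set.Icc (0 : ℝ) 1,
    sigmaCoeff (K / (N - 1)) (1 - l) (t₁ - t₀) * h t₀ ^ (1 / (N - 1)) +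
        sigmaCoeff (K / (N - 1)) l (t₁ - t₀) * h t₁ ^ (1 / (N - 1)) ≤
      h ((1 - l) * t₀ + l * t₁) ^ (1 / (N - 1))

/-- The model Jacobian `J_{K,N,H₀}(θ)`. -/
def modelJacobian (K N H₀ θ : ℝ) : ℝ :=
  if 0 < K then
    max (Real.cos (θ * Real.sqrt (K / (N - 1))) +
        H₀ / Real.sqrt (K * (N - 1)) * Real.sin (θ * Real.sqrt (K / (N - 1)))) 0 ^ (N - 1)
  else if K = 0 then max (1 + H₀ * θ / (N - 1)) 0 ^ (N - 1)
  else
    max (Real.cosh (θ * Real.sqrt (-K / (N - 1))) +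
        H₀ / Real.sqrt (-K * (N - 1)) * Real.sinh (θ * Real.sqrt (-K / (N - 1)))) 0 ^ (N - 1)

lemma tendsto_div_right {f : ℝ → ℝ} {f' : ℝ} (hf : HasDerivAt f f' 0) (h0 : f 0 = 0) :
    Tendsto (fun l => f l / l) (𝓝[>] (0:ℝ)) (𝓝 f') := by
  have H := hasDerivAt_iff_tendsto_slope.mp hf
  have : Tendsto (slope f 0) (𝓝[>] (0:ℝ)) (𝓝 f') :=
    H.mono_left (nhdsWithin_mono _ (fun x hx => ne_of_gt hx))
  exact this.congr (fun l => by simp [slope_fun_def, h0, div_eq_inv_mul])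

lemma tendsto_slope_right {f : ℝ → ℝ} {f' : ℝ} (hf : HasDerivWithinAt f f' (Ici 0) 0) :
    Tendsto (fun l => (f l - f 0) / l) (𝓝[>] (0:ℝ)) (𝓝 f') := by
  have H := hasDerivWithinAt_iff_tendsto_slope.mp hf
  rw [show Ici (0:ℝ) \ {0} = Ioi 0 by simp] at H
  exact H.congr (fun l => by simp [slope_fun_def, div_eq_inv_mul])

lemma tendsto_sin_div (c : ℝ) :
    Tendsto (fun l => Real.sin (l*c)/l) (𝓝[>] (0:ℝ)) (𝓝 c) := by
  have h1 : HasDerivAt (fun l : ℝ => Real.sin (l*c)) (Real.cos (0*c) * c) 0 :=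
    by have := (Real.hasDerivAt_sin (0*c)).comp 0 (hasDerivAt_mul_const c); exact this
  simp only [zero_mul, Real.cos_zero, one_mul] at h1
  exact tendsto_div_right h1 (by simp)

lemma tendsto_one_sub_cos_div (c : ℝ) :
    Tendsto (fun l => (1 - Real.cos (l*c))/l) (𝓝[>] (0:ℝ)) (𝓝 0) := by
  have h1 : HasDerivAt (fun l : ℝ => Real.cos (l*c)) (-Real.sin (0*c) * c) 0 :=
    by have := (Real.hasDerivAt_cos (0*c)).comp 0 (hasDerivAt_mul_const c); exact this
  have h2 := h1.const_sub 1
  simp only [zero_mul, Real.sin_zero, neg_zero, sub_zero] at h2 ⊢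
  exact tendsto_div_right h2 (by simp)

lemma tendsto_sinh_div (c : ℝ) :
    Tendsto (fun l => Real.sinh (l*c)/l) (𝓝[>] (0:ℝ)) (𝓝 c) := by
  have h1 : HasDerivAt (fun l : ℝ => Real.sinh (l*c)) (Real.cosh (0*c) * c) 0 :=
    by have := (Real.hasDerivAt_sinh (0*c)).comp 0 (hasDerivAt_mul_const c); exact this
  simp only [zero_mul, Real.cosh_zero, one_mul] at h1
  exact tendsto_div_right h1 (by simp)

lemma tendsto_one_sub_cosh_div (c : ℝ) :
    Tendsto (fun l => (1 - Real.cosh (l*c))/l) (𝓝[>] (0:ℝ)) (𝓝 0) := by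
  have h1 : HasDerivAt (fun l : ℝ => Real.cosh (l*c)) (Real.sinh (0*c) * c) 0 :=
    by have := (Real.hasDerivAt_cosh (0*c)).comp 0 (hasDerivAt_mul_const c); exact this
  have h2 := h1.const_sub 1
  simp only [zero_mul, Real.sinh_zero, zero_mul, neg_zero, sub_zero] at h2 ⊢
  exact tendsto_div_right h2 (by simp)

lemma aux_limit (u : ℝ → ℝ) (θ x u'v : ℝ) (S C : ℝ → ℝ)
    (hS : Tendsto (fun l => S (l*x)/l) (𝓝[>] (0:ℝ)) (𝓝 x))
    (hC : Tendsto (fun l => (1 - C (l*x))/l) (𝓝[>] (0:ℝ)) (𝓝 0))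
    (hslope : Tendsto (fun l => (u (l*θ) - u 0)/l) (𝓝[>] (0:ℝ)) (𝓝 (u'v*θ)))
    (hx : 0 < x)
    (hSx : 0 < S x)
    (hSpos : ∀ᶠ l in 𝓝[>] (0:ℝ), 0 < S (l*x))
    (hsub : ∀ l : ℝ, S (x - l*x) = S x * C (l*x) - C x * S (l*x))
    (hineq : ∀ᶠ l in 𝓝[>] (0:ℝ), S (x - l*x)/S x * u 0 + S (l*x)/S x * u θ ≤ u (l*θ)) :
    u θ ≤ u 0 * C x + (u'v*θ/x) * S x := by
  set G : ℝ → ℝ := fun l =>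
    (S x * ((u (l*θ) - u 0)/l) + u 0 * S x * ((1 - C (l*x))/l)) * (l / S (l*x)) + u 0 * C x
    with hGdef
  have hT2 : Tendsto (fun l => l / S (l*x)) (𝓝[>] (0:ℝ)) (𝓝 (1/x)) := by
    have := hS.inv₀ hx.ne'
    rw [one_div]
    exact this.congr (fun l => by rw [inv_div])
  have hG : Tendsto G (𝓝[>] (0:ℝ))
      (𝓝 ((S x * (u'v*θ) + u 0 * S x * 0) * (1/x) + u 0 * C x)) :=
    (((hslope.const_mul (S x)).add (hC.const_mul (u 0 * S x))).mul hT2).add_const _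
  have hL : (S x * (u'v*θ) + u 0 * S x * 0) * (1/x) + u 0 * C x
      = u 0 * C x + (u'v*θ/x) * S x := by ring
  rw [hL] at hG
  refine ge_of_tendsto hG ?_
  filter_upwards [hSpos, hineq, self_mem_nhdsWithin] with l hs h2 hl
  rw [mem_Ioi] at hl
  rw [hsub] at h2
  rw [div_mul_eq_mul_div, div_mul_eq_mul_div, ← add_div, div_le_iff₀ hSx] at h2
  have hGsimp : (S x * ((u (l*θ) - u 0)/l) + u 0 * S x * ((1 - C (l*x))/l)) * (l / S (l*x))
      = (S x * u (l*θ) - u 0 * S x * C (l*x)) / S (l*x) := by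
    field_simp
    ring
  show u θ ≤ (S x * ((u (l*θ) - u 0)/l) + u 0 * S x * ((1 - C (l*x))/l)) * (l / S (l*x))
      + u 0 * C x
  rw [hGsimp, ← sub_le_iff_le_add, le_div_iff₀ hs]
  nlinarith [h2]

lemma finish_aux (h0v hθv c Nm1 : ℝ) (hh0 : 0 < h0v) (hhθ : 0 < hθv) (hn : 0 < Nm1)
    (hc : hθv ^ ((1:ℝ)/Nm1) ≤ h0v ^ ((1:ℝ)/Nm1) * c) : hθv ≤ max c 0 ^ Nm1 * h0v := by
  have hcpos : 0 < c := by
    rcases mul_pos_iff.mp (lt_of_lt_of_le (Real.rpow_pos_of_pos hhθ _) hc) with ⟨_, hh⟩|⟨hh, _⟩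
    · exact hh
    · exact absurd (Real.rpow_pos_of_pos hh0 ((1:ℝ)/Nm1)) (not_lt.mpr hh.le)
  rw [max_eq_left hcpos.le]
  have h1 : ((1:ℝ)/Nm1) * Nm1 = 1 := by field_simp
  calc hθv = (hθv ^ ((1:ℝ)/Nm1)) ^ Nm1 := by
        rw [← Real.rpow_mul hhθ.le, h1, Real.rpow_one]
    _ ≤ (h0v ^ ((1:ℝ)/Nm1) * c) ^ Nm1 :=
        Real.rpow_le_rpow (by positivity) hc hn.le
    _ = h0v * c ^ Nm1 := by
        rw [Real.mul_rpow (by positivity) hcpos.le, ← Real.rpow_mul hh0.le, h1, Real.rpow_one]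
    _ = c ^ Nm1 * h0v := mul_comm _ _

lemma hterm_aux (d u0 h0 H₀ Nm1 a θ : ℝ) (h0pos : 0 < h0) (hu0 : 0 ≤ u0)
    (hn : 0 < Nm1) (ha : 0 < a) (hθ : 0 < θ) (hdH : d ≤ H₀ * h0) :
    d * (1/Nm1) * (u0/h0) * θ / (θ*a) ≤ u0 * (H₀ / (Nm1 * a)) := by
  have hne := h0pos.ne'
  have h1 : d * (u0/h0) ≤ H₀ * u0 := by
    have h2 := mul_le_mul_of_nonneg_right hdH (div_nonneg hu0 h0pos.le)
    rwa [show H₀ * h0 * (u0/h0) = H₀ * u0 by field_simp] at h2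
  calc d * (1/Nm1) * (u0/h0) * θ / (θ*a)
      = θ * (d * (1/Nm1) * (u0/h0)) / (θ*a) := by ring
    _ = d * (1/Nm1) * (u0/h0) / a := by rw [mul_div_mul_left _ _ hθ.ne']
    _ = (d * (u0/h0)) * (1/(Nm1*a)) := by ring
    _ ≤ (H₀ * u0) * (1/(Nm1*a)) := by
        apply mul_le_mul_of_nonneg_right h1; positivity
    _ = u0 * (H₀/(Nm1*a)) := by ring

lemma hfin_aux (u0 q r Cx Sx : ℝ) (hq : q ≤ u0 * r) (hS : 0 ≤ Sx) :
    u0 * Cx + q * Sx ≤ u0 * (Cx + r * Sx) := by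
  nlinarith [mul_le_mul_of_nonneg_right hq hS]


/-- One-dimensional density estimate (Heintze–Karcher/Ketterer form): a positive
`(K,N)`-convex density `h` on `[0,T)` with right derivative at `0` bounded by
`H₀ · h(0)` satisfies `h(θ) ≤ J_{K,N,H₀}(θ) · h(0)` throughout `[0,T)`. -/
theorem density_estimate (K N T H₀ : ℝ) (hN : 1 < N) (hT : 0 < T)
    (hKT : 0 < K → T ≤ Real.pi * Real.sqrt ((N - 1) / K))
    (h : ℝ → ℝ) (hpos : ∀ t ∈ Set.Ico (0 : ℝ) T, 0 < h t)
    (hconv : KNConvexOn K N (Set.Ico 0 T) h)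
    (d : ℝ) (hder : HasDerivWithinAt h d (Set.Ici (0 : ℝ)) 0) (hdH : d ≤ H₀ * h 0) :
    ∀ θ ∈ Set.Ico (0 : ℝ) T, h θ ≤ modelJacobian K N H₀ θ * h 0 := by
  intro θ hθmem
  obtain ⟨hθ0, hθT⟩ := hθmem
  have hn : (0:ℝ) < N - 1 := by linarith
  have h0pos : 0 < h 0 := hpos 0 ⟨le_rfl, hT⟩
  rcases eq_or_lt_of_le hθ0 with rfl | hθpos
  · have hmj : modelJacobian K N H₀ 0 = 1 := by
      unfold modelJacobian
      split_ifs <;> norm_num [Real.one_rpow]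
    rw [hmj, one_mul]
  · have hθh : 0 < h θ := hpos θ ⟨hθ0, hθT⟩
    have hu0 : 0 < h 0 ^ ((1:ℝ)/(N-1)) := Real.rpow_pos_of_pos h0pos _
    have huθ : 0 < h θ ^ ((1:ℝ)/(N-1)) := Real.rpow_pos_of_pos hθh _
    -- derivative of u := h ^ (1/(N-1)) from the right at 0
    have hud : HasDerivWithinAt (fun t => h t ^ ((1:ℝ)/(N-1)))
        (d * ((1:ℝ)/(N-1)) * h 0 ^ (((1:ℝ)/(N-1)) - 1)) (Ici 0) 0 :=
      hder.rpow_const (Or.inl h0pos.ne')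
    have hmulθ : HasDerivWithinAt (fun l : ℝ => l*θ) θ (Ici 0) 0 :=
      (hasDerivAt_mul_const θ).hasDerivWithinAt
    have hud0 : HasDerivWithinAt (fun t => h t ^ ((1:ℝ)/(N-1)))
        (d * ((1:ℝ)/(N-1)) * h 0 ^ (((1:ℝ)/(N-1)) - 1)) (Ici 0) ((fun l : ℝ => l*θ) 0) := by
      simpa using hud
    have hcomp := hud0.comp 0 hmulθ
      (fun l (hl : l ∈ Ici (0:ℝ)) => mul_nonneg hl hθpos.le)
    have hslope : Tendsto
        (fun l => ((fun t => h t ^ ((1:ℝ)/(N-1))) (l*θ) - (fun t => h t ^ ((1:ℝ)/(N-1))) 0)/l)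
        (𝓝[>] (0:ℝ)) (𝓝 ((d * ((1:ℝ)/(N-1)) * h 0 ^ (((1:ℝ)/(N-1)) - 1)) * θ)) := by
      have := tendsto_slope_right hcomp
      refine this.congr (fun l => ?_)
      simp [Function.comp]
    have hrw : h 0 ^ (((1:ℝ)/(N-1)) - 1) = h 0 ^ ((1:ℝ)/(N-1)) / h 0 := by
      rw [Real.rpow_sub h0pos, Real.rpow_one]
    have hkey : ∀ l ∈ Ioo (0:ℝ) 1,
        sigmaCoeff (K/(N-1)) (1-l) θ * h 0 ^ ((1:ℝ)/(N-1))
          + sigmaCoeff (K/(N-1)) l θ * h θ ^ ((1:ℝ)/(N-1)) ≤ h (l*θ) ^ ((1:ℝ)/(N-1)) := by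
      intro l hl
      have h2 := hconv 0 ⟨le_rfl, hT⟩ θ ⟨hθ0, hθT⟩ hθpos l ⟨hl.1.le, hl.2.le⟩
      rw [show (1-l)*0 + l*θ = l*θ by ring, sub_zero] at h2
      exact h2
    rcases lt_trichotomy 0 K with hK | hK | hK
    · -- K > 0
      have hκ : 0 < K/(N-1) := div_pos hK hn
      have ha : 0 < Real.sqrt (K/(N-1)) := Real.sqrt_pos.mpr hκ
      set a := Real.sqrt (K/(N-1)) with ha_def
      have hx : 0 < θ * a := mul_pos hθpos ha
      have hxπ : θ * a < Real.pi := by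
        have h1 := hKT hK
        have hprod : Real.sqrt ((N-1)/K) * a = 1 := by
          rw [ha_def, ← Real.sqrt_mul (by positivity),
            show (N-1)/K * (K/(N-1)) = 1 by field_simp]
          exact Real.sqrt_one
        calc θ * a < T * a := mul_lt_mul_of_pos_right hθT ha
          _ ≤ Real.pi * Real.sqrt ((N-1)/K) * a := mul_le_mul_of_nonneg_right h1 ha.le
          _ = Real.pi := by rw [mul_assoc, hprod, mul_one]
      have hsinx : 0 < Real.sin (θ*a) := Real.sin_pos_of_pos_of_lt_pi hx hxπ
      have hsig : ∀ s : ℝ, sigmaCoeff (K/(N-1)) s θ = Real.sin (s*(θ*a))/Real.sin (θ*a) := by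
        intro s
        rw [sigmaCoeff, if_pos hκ, ← ha_def, show s*θ*a = s*(θ*a) by ring]
      have hSpos : ∀ᶠ l in 𝓝[>] (0:ℝ), 0 < Real.sin (l*(θ*a)) := by
        filter_upwards [Ioo_mem_nhdsGT_of_mem
          (⟨le_rfl, by positivity⟩ : (0:ℝ) ∈ Ico 0 (Real.pi/(θ*a)))] with l hl
        refine Real.sin_pos_of_pos_of_lt_pi (mul_pos hl.1 hx) ?_
        calc l*(θ*a) < (Real.pi/(θ*a))*(θ*a) := mul_lt_mul_of_pos_right hl.2 hx
          _ = Real.pi := div_mul_cancel₀ _ hx.ne'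
      have hineqF : ∀ᶠ l in 𝓝[>] (0:ℝ),
          Real.sin (θ*a - l*(θ*a))/Real.sin (θ*a) * h 0 ^ ((1:ℝ)/(N-1))
            + Real.sin (l*(θ*a))/Real.sin (θ*a) * h θ ^ ((1:ℝ)/(N-1))
            ≤ h (l*θ) ^ ((1:ℝ)/(N-1)) := by
        filter_upwards [Ioo_mem_nhdsGT_of_mem
          (⟨le_rfl, one_pos⟩ : (0:ℝ) ∈ Ico (0:ℝ) 1)] with l hl
        have h2 := hkey l hl
        rw [hsig, hsig, show (1-l)*(θ*a) = θ*a - l*(θ*a) by ring] at h2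
        exact h2
      have main := aux_limit (fun t => h t ^ ((1:ℝ)/(N-1))) θ (θ*a)
        (d * ((1:ℝ)/(N-1)) * h 0 ^ (((1:ℝ)/(N-1)) - 1)) Real.sin Real.cos
        (tendsto_sin_div (θ*a)) (tendsto_one_sub_cos_div (θ*a)) hslope hx hsinx hSpos
        (fun l => Real.sin_sub (θ*a) (l*(θ*a))) hineqF
      have hsqrt : Real.sqrt (K*(N-1)) = (N-1) * a := by
        rw [show K*(N-1) = (K/(N-1))*(N-1)^2 by field_simp,
          Real.sqrt_mul hκ.le, Real.sqrt_sq hn.le, ← ha_def, mul_comm]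
      have hterm : d * ((1:ℝ)/(N-1)) * h 0 ^ (((1:ℝ)/(N-1)) - 1) * θ / (θ*a)
          ≤ h 0 ^ ((1:ℝ)/(N-1)) * (H₀ / Real.sqrt (K*(N-1))) := by
        rw [hsqrt, hrw]
        exact hterm_aux d _ _ H₀ _ a θ h0pos hu0.le hn ha hθpos hdH
      have hfin := hfin_aux (h 0 ^ ((1:ℝ)/(N-1))) _ _ (Real.cos (θ*a)) (Real.sin (θ*a))
        hterm hsinx.le
      have hc := main.trans hfin
      have hmj : modelJacobian K N H₀ θ
          = max (Real.cos (θ*a) + H₀ / Real.sqrt (K*(N-1)) * Real.sin (θ*a)) 0 ^ (N-1) := by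
        rw [modelJacobian, if_pos hK, ← ha_def]
      rw [hmj]
      exact finish_aux (h 0) (h θ) _ (N-1) h0pos hθh hn hc
    · -- K = 0
      have hK0 : K = 0 := hK.symm
      have hsig : ∀ s : ℝ, sigmaCoeff (K/(N-1)) s θ = s := by
        intro s
        rw [hK0, zero_div, sigmaCoeff, if_neg (lt_irrefl 0), if_pos rfl]
      have hG : Tendsto (fun l =>
          ((fun t => h t ^ ((1:ℝ)/(N-1))) (l*θ) - (fun t => h t ^ ((1:ℝ)/(N-1))) 0)/l
          + h 0 ^ ((1:ℝ)/(N-1))) (𝓝[>] (0:ℝ))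
          (𝓝 ((d * ((1:ℝ)/(N-1)) * h 0 ^ (((1:ℝ)/(N-1)) - 1)) * θ + h 0 ^ ((1:ℝ)/(N-1)))) :=
        hslope.add_const _
      have main : h θ ^ ((1:ℝ)/(N-1))
          ≤ (d * ((1:ℝ)/(N-1)) * h 0 ^ (((1:ℝ)/(N-1)) - 1)) * θ + h 0 ^ ((1:ℝ)/(N-1)) := by
        refine ge_of_tendsto hG ?_
        filter_upwards [Ioo_mem_nhdsGT_of_mem
          (⟨le_rfl, one_pos⟩ : (0:ℝ) ∈ Ico (0:ℝ) 1)] with l hl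
        have h2 := hkey l hl
        rw [hsig, hsig] at h2
        have hlpos := hl.1
        rw [← sub_le_iff_le_add, le_div_iff₀ hlpos]
        nlinarith [h2]
      have hbound : (d * ((1:ℝ)/(N-1)) * h 0 ^ (((1:ℝ)/(N-1)) - 1)) * θ + h 0 ^ ((1:ℝ)/(N-1))
          ≤ h 0 ^ ((1:ℝ)/(N-1)) * (1 + H₀ * θ / (N-1)) := by
        rw [hrw]
        have h1 : d * (h 0 ^ ((1:ℝ)/(N-1)) / h 0) ≤ H₀ * h 0 ^ ((1:ℝ)/(N-1)) := by
          have h2 := mul_le_mul_of_nonneg_right hdH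
            (div_nonneg hu0.le h0pos.le)
          rwa [show H₀ * h 0 * (h 0 ^ ((1:ℝ)/(N-1)) / h 0) = H₀ * h 0 ^ ((1:ℝ)/(N-1)) by
            field_simp] at h2
        calc d * ((1:ℝ)/(N-1)) * (h 0 ^ ((1:ℝ)/(N-1)) / h 0) * θ + h 0 ^ ((1:ℝ)/(N-1))
            = (d * (h 0 ^ ((1:ℝ)/(N-1)) / h 0)) * (θ/(N-1)) + h 0 ^ ((1:ℝ)/(N-1)) := by ring
          _ ≤ (H₀ * h 0 ^ ((1:ℝ)/(N-1))) * (θ/(N-1)) + h 0 ^ ((1:ℝ)/(N-1)) := by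
              have : (0:ℝ) ≤ θ/(N-1) := by positivity
              nlinarith [mul_le_mul_of_nonneg_right h1 this]
          _ = h 0 ^ ((1:ℝ)/(N-1)) * (1 + H₀ * θ / (N-1)) := by ring
      have hc := main.trans hbound
      have hmj : modelJacobian K N H₀ θ = max (1 + H₀ * θ / (N-1)) 0 ^ (N-1) := by
        rw [modelJacobian, if_neg (by rw [hK0]; exact lt_irrefl 0), if_pos hK0]
      rw [hmj]
      exact finish_aux (h 0) (h θ) _ (N-1) h0pos hθh hn hc
    · -- K < 0
      have hκ : 0 < -K/(N-1) := div_pos (by linarith) hn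
      have ha : 0 < Real.sqrt (-K/(N-1)) := Real.sqrt_pos.mpr hκ
      set a := Real.sqrt (-K/(N-1)) with ha_def
      have hx : 0 < θ * a := mul_pos hθpos ha
      have hsinhx : 0 < Real.sinh (θ*a) := Real.sinh_pos_iff.mpr hx
      have hsig : ∀ s : ℝ, sigmaCoeff (K/(N-1)) s θ = Real.sinh (s*(θ*a))/Real.sinh (θ*a) := by
        intro s
        rw [sigmaCoeff, if_neg (not_lt.mpr (le_of_lt (div_neg_of_neg_of_pos hK hn))),
          if_neg (div_ne_zero hK.ne hn.ne'), show -(K/(N-1)) = -K/(N-1) by ring, ← ha_def,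
          show s*θ*a = s*(θ*a) by ring]
      have hSpos : ∀ᶠ l in 𝓝[>] (0:ℝ), 0 < Real.sinh (l*(θ*a)) := by
        filter_upwards [self_mem_nhdsWithin] with l hl
        exact Real.sinh_pos_iff.mpr (mul_pos hl hx)
      have hineqF : ∀ᶠ l in 𝓝[>] (0:ℝ),
          Real.sinh (θ*a - l*(θ*a))/Real.sinh (θ*a) * h 0 ^ ((1:ℝ)/(N-1))
            + Real.sinh (l*(θ*a))/Real.sinh (θ*a) * h θ ^ ((1:ℝ)/(N-1))
            ≤ h (l*θ) ^ ((1:ℝ)/(N-1)) := by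
        filter_upwards [Ioo_mem_nhdsGT_of_mem
          (⟨le_rfl, one_pos⟩ : (0:ℝ) ∈ Ico (0:ℝ) 1)] with l hl
        have h2 := hkey l hl
        rw [hsig, hsig, show (1-l)*(θ*a) = θ*a - l*(θ*a) by ring] at h2
        exact h2
      have main := aux_limit (fun t => h t ^ ((1:ℝ)/(N-1))) θ (θ*a)
        (d * ((1:ℝ)/(N-1)) * h 0 ^ (((1:ℝ)/(N-1)) - 1)) Real.sinh Real.cosh
        (tendsto_sinh_div (θ*a)) (tendsto_one_sub_cosh_div (θ*a)) hslope hx hsinhx hSpos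
        (fun l => Real.sinh_sub (θ*a) (l*(θ*a))) hineqF
      have hsqrt : Real.sqrt (-K*(N-1)) = (N-1) * a := by
        rw [show -K*(N-1) = (-K/(N-1))*(N-1)^2 by field_simp,
          Real.sqrt_mul hκ.le, Real.sqrt_sq hn.le, ← ha_def, mul_comm]
      have hterm : d * ((1:ℝ)/(N-1)) * h 0 ^ (((1:ℝ)/(N-1)) - 1) * θ / (θ*a)
          ≤ h 0 ^ ((1:ℝ)/(N-1)) * (H₀ / Real.sqrt (-K*(N-1))) := by
        rw [hsqrt, hrw]
        exact hterm_aux d _ _ H₀ _ a θ h0pos hu0.le hn ha hθpos hdH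
      have hfin := hfin_aux (h 0 ^ ((1:ℝ)/(N-1))) _ _ (Real.cosh (θ*a)) (Real.sinh (θ*a))
        hterm hsinhx.le
      have hc := main.trans hfin
      have hmj : modelJacobian K N H₀ θ
          = max (Real.cosh (θ*a) + H₀ / Real.sqrt (-K*(N-1)) * Real.sinh (θ*a)) 0 ^ (N-1) := by
        rw [modelJacobian, if_neg (not_lt.mpr hK.le), if_neg hK.ne, ← ha_def]
      rw [hmj]
      exact finish_aux (h 0) (h θ) _ (N-1) h0pos hθh hn hc
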